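/- arXiv:2412.01088 — 4 statements merged into one kernel-verified Lean document; each statement's English description precedes it below -/
import Mathlib

section
/- If P is a complex polynomial of degree at most n, m ≤ n, and M = max_{|z|=1} |P(z)|, then for all z with |z| ≥ 1, |P^{(m)}(z)| ≤ (n!/(n−m)!)·|z|^{n−m}·M, i.e. the modulus of the m-th derivative of P at z is bounded by the modulus of the m-th derivative of z^n at z times M. -/
open Polynomial Finset

lemma multiset_sum_pos (s : Multiset ℝ) (h : ∀ x ∈ s, 0 < x) (hs : s ≠ 0) : 0 < s.sum := by
  induction s using Multiset.induction_on with
  | empty => exact absurd rfl hs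
  | cons a t ih =>
    rw [Multiset.sum_cons]
    rcases eq_or_ne t 0 with rfl | ht
    · simpa using h a (Multiset.mem_cons_self a 0)
    · have := ih (fun x hx => h x (Multiset.mem_cons_of_mem hx)) ht
      have := h a (Multiset.mem_cons_self a t)
      linarith

lemma re_term_pos {z r : ℂ} (hz : 1 < ‖z‖) (hr : ‖r‖ ≤ 1) : 0 < ((z - r)⁻¹ * z).re := by
  have hu : z - r ≠ 0 := by
    intro h
    rw [sub_eq_zero.1 h] at hz; linarith
  have hns : 0 < Complex.normSq (z - r) := Complex.normSq_pos.2 hu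
  have hre : ((z - r)⁻¹ * z).re
      = ((z - r).re * z.re + (z - r).im * z.im) / Complex.normSq (z - r) := by
    rw [Complex.mul_re, Complex.inv_re, Complex.inv_im]
    field_simp
    ring
  rw [hre]
  apply div_pos _ hns
  have h1 : (r * (starRingEnd ℂ) z).re ≤ ‖r‖ * ‖z‖ := by
    calc (r * (starRingEnd ℂ) z).re ≤ ‖r * (starRingEnd ℂ) z‖ :=
          Complex.re_le_norm _
      _ = ‖r‖ * ‖z‖ := by
          rw [norm_mul, Complex.norm_conj]
  have h2 : (r * (starRingEnd ℂ) z).re = r.re * z.re + r.im * z.im := by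
    simp [Complex.mul_re, Complex.conj_re, Complex.conj_im]
  have h3 : z.re * z.re + z.im * z.im = ‖z‖ ^ 2 := by
    rw [Complex.sq_norm, Complex.normSq_apply]
  have h0 : (0:ℝ) ≤ ‖z‖ := norm_nonneg z
  rw [h2] at h1
  simp only [Complex.sub_re, Complex.sub_im]
  nlinarith

lemma eval_derivative_multiset_prod (s : Multiset ℂ) (z : ℂ) (hz : ∀ r ∈ s, z ≠ r) :
    (derivative (s.map (fun r => X - C r)).prod).eval z
      = (s.map (fun r => X - C r)).prod.eval z * (s.map (fun r => (z - r)⁻¹)).sum := by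
  induction s using Multiset.induction_on with
  | empty => simp
  | cons a t ih =>
    have ha : z - a ≠ 0 := sub_ne_zero.2 (hz a (Multiset.mem_cons_self a t))
    have hzs : ∀ r ∈ t, z ≠ r := fun r hr => hz r (Multiset.mem_cons_of_mem hr)
    simp only [Multiset.map_cons, Multiset.prod_cons, derivative_mul, derivative_sub,
      derivative_X, derivative_C, sub_zero, one_mul, eval_add, eval_mul, eval_sub, eval_X,
      eval_C, Multiset.sum_cons, ih hzs]
    field_simp

lemma gauss_lucas_ball (f : ℂ[X]) (hf : f ≠ 0) (hd : f.natDegree ≠ 0)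
    (hroots : ∀ w : ℂ, f.IsRoot w → ‖w‖ ≤ 1) :
    ∀ z : ℂ, 1 < ‖z‖ → (derivative f).eval z ≠ 0 := by
  intro z hz
  have hcard : Multiset.card f.roots = f.natDegree :=
    splits_iff_card_roots.1 (IsAlgClosed.splits f)
  have hfe : C f.leadingCoeff * (f.roots.map fun r => X - C r).prod = f :=
    C_leadingCoeff_mul_prod_multiset_X_sub_C hcard
  have hzr : ∀ r ∈ f.roots, z ≠ r := by
    intro r hr h
    have hr' : ‖r‖ ≤ 1 := hroots r ((mem_roots'.1 hr).2)
    rw [h] at hz; linarith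
  have hfz : f.eval z ≠ 0 := fun h => absurd (hroots z h) (not_le.2 hz)
  have hev : f.eval z = f.leadingCoeff * ((f.roots.map fun r => X - C r).prod).eval z := by
    conv_lhs => rw [← hfe]
    rw [eval_mul, eval_C]
  have hder : (derivative f).eval z
      = f.eval z * (f.roots.map fun r => (z - r)⁻¹).sum := by
    conv_lhs => rw [← hfe]
    rw [derivative_C_mul, eval_mul, eval_C,
      eval_derivative_multiset_prod _ _ hzr, hev]
    ring
  have hsne : f.roots ≠ 0 := by
    intro h
    rw [h] at hcard; simp at hcard; exact hd hcard.symm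
  have hpos : 0 < (((f.roots.map fun r => (z - r)⁻¹).sum) * z).re := by
    rw [← Multiset.sum_map_mul_right, ← Complex.coe_reAddGroupHom,
      map_multiset_sum, Multiset.map_map]
    apply multiset_sum_pos
    · intro x hx
      rw [Multiset.mem_map] at hx
      obtain ⟨r, hr, rfl⟩ := hx
      exact re_term_pos hz (hroots r ((mem_roots'.1 hr).2))
    · simpa [Multiset.map_eq_zero] using hsne
  have hS : (f.roots.map fun r => (z - r)⁻¹).sum ≠ 0 := by
    intro h
    rw [h, zero_mul] at hpos; simp at hpos
  rw [hder]
  exact mul_ne_zero hfz hS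

lemma eval_revPoly (n : ℕ) (P : ℂ[X]) (hP : P.natDegree ≤ n) (w : ℂ) (hw : w ≠ 0) :
    (∑ k ∈ range (n+1), C (P.coeff k) * X^(n-k)).eval w = w^n * P.eval w⁻¹ := by
  rw [eval_finset_sum, Polynomial.eval_eq_sum_range' (Nat.lt_succ_of_le hP), mul_sum]
  refine Finset.sum_congr rfl fun k hk => ?_
  rw [mem_range, Nat.lt_succ_iff] at hk
  rw [eval_mul, eval_C, eval_pow, eval_X]
  have hwn : w ^ n = w ^ (n - k) * w ^ k := by rw [← pow_add, Nat.sub_add_cancel hk]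
  rw [hwn, inv_pow]
  field_simp

lemma eval_revPoly_zero (n : ℕ) (P : ℂ[X]) :
    (∑ k ∈ range (n+1), C (P.coeff k) * X^(n-k)).eval 0 = P.coeff n := by
  rw [eval_finset_sum, Finset.sum_eq_single n]
  · simp
  · intro k hk hkn
    have h : n - k ≠ 0 := by rw [mem_range] at hk; omega
    simp [zero_pow h]
  · intro h; exact absurd (self_mem_range_succ n) h

lemma revPoly_bound (n : ℕ) (P : ℂ[X]) (hP : P.natDegree ≤ n) (M : ℝ)
    (hM : ∀ z ∈ Metric.sphere (0:ℂ) 1, ‖P.eval z‖ ≤ M) :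
    ∀ w ∈ Metric.closedBall (0:ℂ) 1,
      ‖(∑ k ∈ range (n+1), C (P.coeff k) * X^(n-k)).eval w‖ ≤ M := by
  intro w hw
  have hcl : w ∈ closure (Metric.ball (0:ℂ) 1) := by
    rwa [closure_ball (0:ℂ) one_ne_zero]
  refine Complex.norm_le_of_forall_mem_frontier_norm_le
    (f := fun x => (∑ k ∈ range (n+1), C (P.coeff k) * X^(n-k)).eval x) Metric.isBounded_ball
    ((Polynomial.differentiable _).diffContOnCl) ?_ hcl
  intro x hx
  rw [frontier_ball (0:ℂ) one_ne_zero] at hx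
  have hx1 : ‖x‖ = 1 := mem_sphere_zero_iff_norm.1 hx
  have hx0 : x ≠ 0 := by intro h; rw [h] at hx1; simp at hx1
  rw [eval_revPoly n P hP x hx0, norm_mul, norm_pow, hx1, one_pow, one_mul]
  apply hM
  rw [mem_sphere_zero_iff_norm, norm_inv, hx1, inv_one]
lemma bernstein_key (n m : ℕ) (hm : m ≤ n) (P : ℂ[X]) (hPn : P.natDegree ≤ n)
    (M : ℝ) (hM0 : 0 ≤ M)
    (hMb : ∀ z ∈ Metric.sphere (0:ℂ) 1, ‖P.eval z‖ ≤ M)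
    (M' : ℝ) (hM' : M < M') :
    ∀ z : ℂ, 1 < ‖z‖ →
    ‖(derivative^[m] P).eval z‖ ≤ (n.descFactorial m : ℝ) * ‖z‖^(n-m) * M' := by
  intro z hz
  by_contra hcon
  push_neg at hcon
  have hM'0 : 0 < M' := lt_of_le_of_lt hM0 hM'
  have hz0 : z ≠ 0 := by
    intro h; rw [h, norm_zero] at hz; linarith
  have hDne : n.descFactorial m ≠ 0 := by
    intro h
    exact absurd (Nat.descFactorial_eq_zero_iff_lt.1 h) (not_lt.2 hm)
  have hD0 : 0 < (n.descFactorial m : ℝ) := by positivity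
  set denom : ℂ := (n.descFactorial m : ℂ) * z^(n-m) * (M' : ℂ) with hdenom_def
  have hdenom_norm : ‖denom‖ = (n.descFactorial m : ℝ) * ‖z‖^(n-m) * M' := by
    rw [hdenom_def, norm_mul, norm_mul, norm_pow, Complex.norm_natCast,
      Complex.norm_real, Real.norm_eq_abs, abs_of_pos hM'0]
  have hdenom_pos : 0 < ‖denom‖ := by
    rw [hdenom_norm]; positivity
  have hdenom_ne : denom ≠ 0 := by
    intro h; rw [h, norm_zero] at hdenom_pos; linarith
  set lam : ℂ := (derivative^[m] P).eval z / denom with hlam_def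
  have hlam_mul : lam * denom = (derivative^[m] P).eval z := div_mul_cancel₀ _ hdenom_ne
  have hlam : 1 < ‖lam‖ := by
    rw [hlam_def, norm_div, lt_div_iff₀ hdenom_pos, one_mul, hdenom_norm]
    exact hcon
  set f : ℂ[X] := P - C (lam * (M' : ℂ)) * X^n with hf_def
  have hQb := revPoly_bound n P hPn M hMb
  have hcoeffn : ‖P.coeff n‖ ≤ M := by
    have := hQb 0 (Metric.mem_closedBall_self (by norm_num))
    rwa [eval_revPoly_zero] at this
  have hlamM' : M < ‖lam * (M' : ℂ)‖ := by
    rw [norm_mul, Complex.norm_real, Real.norm_eq_abs, abs_of_pos hM'0]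
    nlinarith
  have hfroots : ∀ w : ℂ, f.IsRoot w → ‖w‖ ≤ 1 := by
    intro w hw
    by_contra hw1
    push_neg at hw1
    have hw0 : w ≠ 0 := by intro h; rw [h, norm_zero] at hw1; linarith
    have hPw : P.eval w = lam * (M' : ℂ) * w^n := by
      have h0 : P.eval w - lam * (M' : ℂ) * w^n = 0 := by
        simpa [hf_def, IsRoot] using hw
      linear_combination h0
    have hQw := hQb w⁻¹ (by
      rw [Metric.mem_closedBall, dist_zero_right, norm_inv]
      exact inv_le_one_of_one_le₀ hw1.le)
    rw [eval_revPoly n P hPn w⁻¹ (inv_ne_zero hw0), inv_inv, hPw] at hQw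
    rw [norm_mul, norm_pow, norm_inv, norm_mul, norm_pow] at hQw
    have hwpow : (0:ℝ) < ‖w‖^n := by positivity
    have : ‖w‖⁻¹ ^ n * (‖lam * (M' : ℂ)‖ * ‖w‖ ^ n) = ‖lam * (M' : ℂ)‖ := by
      rw [inv_pow, mul_comm, mul_assoc, mul_inv_cancel₀ (ne_of_gt hwpow), mul_one]
    rw [this] at hQw
    linarith
  have hfcoeff : f.coeff n = P.coeff n - lam * (M' : ℂ) := by
    rw [hf_def, coeff_sub, coeff_C_mul, coeff_X_pow]
    simp
  have hfcn : f.coeff n ≠ 0 := by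
    rw [hfcoeff]
    intro h
    have := sub_eq_zero.1 h
    rw [← this] at hlamM'
    linarith
  have hfne : f ≠ 0 := fun h => hfcn (by rw [h]; simp)
  have hfdeg : f.natDegree = n := by
    refine le_antisymm ?_ (le_natDegree_of_ne_zero hfcn)
    refine (natDegree_sub_le _ _).trans (max_le hPn ?_)
    exact (natDegree_C_mul_le _ _).trans (by simp)
  have hgcoeff : ∀ k, k ≤ m → (derivative^[k] f).coeff (n - k) ≠ 0 := by
    intro k hk
    rw [coeff_iterate_derivative, Nat.sub_add_cancel (hk.trans hm), nsmul_eq_mul]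
    refine mul_ne_zero (Nat.cast_ne_zero.2 ?_) hfcn
    intro h
    exact absurd (Nat.descFactorial_eq_zero_iff_lt.1 h) (not_lt.2 (hk.trans hm))
  have hgne : ∀ k, k ≤ m → derivative^[k] f ≠ 0 := by
    intro k hk h
    exact hgcoeff k hk (by rw [h]; simp)
  have hgdeg : ∀ k, k ≤ m → (derivative^[k] f).natDegree = n - k := by
    intro k hk
    refine le_antisymm ?_ (le_natDegree_of_ne_zero (hgcoeff k hk))
    exact (natDegree_iterate_derivative f k).trans (by rw [hfdeg])
  have hgroots : ∀ k, k ≤ m → ∀ w : ℂ, (derivative^[k] f).IsRoot w → ‖w‖ ≤ 1 := by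
    intro k
    induction k with
    | zero => intro _ w hw; exact hfroots w hw
    | succ k ih =>
      intro hk w hw
      by_contra hw1
      push_neg at hw1
      have hk' : k ≤ m := Nat.le_of_succ_le hk
      have hkn : n - k ≠ 0 := by omega
      refine gauss_lucas_ball (derivative^[k] f) (hgne k hk')
        (by rw [hgdeg k hk']; exact hkn) (ih hk') w hw1 ?_
      rw [Function.iterate_succ_apply'] at hw
      exact hw
  have hgm : (derivative^[m] f).IsRoot z := by
    have hexp : derivative^[m] f
        = derivative^[m] P - C (lam * (M' : ℂ)) * (C (n.descFactorial m : ℂ) * X^(n-m)) := by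
      rw [hf_def, iterate_derivative_sub, iterate_derivative_C_mul,
        iterate_derivative_X_pow_eq_C_mul]
    rw [IsRoot, hexp, eval_sub, eval_mul, eval_mul, eval_C, eval_C, eval_pow, eval_X]
    rw [← hlam_mul, hdenom_def]
    ring
  have := hgroots m le_rfl z hgm
  linarith

theorem bernstein_mth_derivative
    (n m : ℕ) (hm : m ≤ n)
    (P : Polynomial ℂ) (hP : P.degree ≤ (n : ℕ))
    (M : ℝ) (hM : IsGreatest ((fun z => ‖P.eval z‖) '' Metric.sphere (0 : ℂ) 1) M) :
    ∀ z : ℂ, 1 ≤ ‖z‖ →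
      ‖(Polynomial.derivative^[m] P).eval z‖ ≤
        (n.factorial : ℝ) / ((n - m).factorial : ℝ) * ‖z‖ ^ (n - m) * M := by
  intro z hz
  have hPn : P.natDegree ≤ n := natDegree_le_iff_degree_le.2 hP
  have hM0 : 0 ≤ M := by
    obtain ⟨w, hw, hwe⟩ := hM.1
    rw [← hwe]; positivity
  have hMb : ∀ w ∈ Metric.sphere (0:ℂ) 1, ‖P.eval w‖ ≤ M := fun w hw => hM.2 ⟨w, hw, rfl⟩
  have hfac : (n.factorial : ℝ) / ((n - m).factorial : ℝ) = (n.descFactorial m : ℝ) := by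
    rw [div_eq_iff (Nat.cast_ne_zero.2 (Nat.factorial_ne_zero _) : ((n-m).factorial:ℝ) ≠ 0)]
    exact_mod_cast (Nat.factorial_mul_descFactorial hm).symm.trans (Nat.mul_comm _ _)
  rw [hfac]
  have key := bernstein_key n m hm P hPn M hM0 hMb
  have hle : ∀ᶠ t : ℝ in nhdsWithin 1 (Set.Ioi 1),
      ‖(derivative^[m] P).eval ((t:ℂ) * z)‖
        ≤ (n.descFactorial m : ℝ) * ‖(t:ℂ) * z‖^(n-m) * (M + (t - 1)) := by
    filter_upwards [self_mem_nhdsWithin] with t ht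
    have ht1 : (1:ℝ) < t := ht
    refine key (M + (t-1)) (by linarith) _ ?_
    rw [norm_mul, Complex.norm_real, Real.norm_eq_abs, abs_of_pos (by linarith)]
    nlinarith [norm_nonneg z]
  have h1 : Filter.Tendsto (fun t : ℝ => ‖(derivative^[m] P).eval ((t:ℂ) * z)‖)
      (nhdsWithin 1 (Set.Ioi 1)) (nhds ‖(derivative^[m] P).eval z‖) := by
    have hc : Continuous fun t : ℝ => ‖(derivative^[m] P).eval ((t:ℂ) * z)‖ :=
      ((Polynomial.continuous _).comp (Complex.continuous_ofReal.mul continuous_const)).norm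
    have h := hc.tendsto 1
    simp only [Complex.ofReal_one, one_mul] at h
    exact h.mono_left nhdsWithin_le_nhds
  have h2 : Filter.Tendsto
      (fun t : ℝ => (n.descFactorial m : ℝ) * ‖(t:ℂ) * z‖^(n-m) * (M + (t - 1)))
      (nhdsWithin 1 (Set.Ioi 1)) (nhds ((n.descFactorial m : ℝ) * ‖z‖^(n-m) * M)) := by
    have hc : Continuous fun t : ℝ =>
        (n.descFactorial m : ℝ) * ‖(t:ℂ) * z‖^(n-m) * (M + (t - 1)) := by
      apply Continuous.mul
      · exact continuous_const.mul
          (((Complex.continuous_ofReal.mul continuous_const).norm).pow _)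
      · exact continuous_const.add (continuous_id.sub continuous_const)
    have h := hc.tendsto 1
    simp only [Complex.ofReal_one, one_mul, sub_self, add_zero] at h
    exact h.mono_left nhdsWithin_le_nhds
  exact le_of_tendsto_of_tendsto h1 h2 hle
end

section
/- If P is a complex polynomial of degree at most n with P(z) ≠ 0 for every z with |z| < 1, and M = max_{|z|=1} |P(z)|, then |P(z)| ≤ (1/2)·(|z|^n + 1)·M for all z with |z| ≥ 1. -/
open Polynomial Finset Complex

noncomputable def revP (n : ℕ) (W : ℂ[X]) : ℂ[X] :=
  ∑ k ∈ Finset.range (n + 1), C (W.coeff (n - k)) * X ^ k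

lemma revP_eval (n : ℕ) (W : ℂ[X]) (hW : W.degree ≤ n) (v : ℂ) (hv : v ≠ 0) :
    (revP n W).eval v = v ^ n * W.eval v⁻¹ := by
  have hnd : W.natDegree ≤ n := natDegree_le_iff_degree_le.2 hW
  have h1 : (revP n W).eval v = ∑ k ∈ Finset.range (n + 1), W.coeff (n - k) * v ^ k := by
    simp [revP, eval_finset_sum]
  rw [h1, Polynomial.eval_eq_sum_range' (Nat.lt_succ_of_le hnd), Finset.mul_sum,
    ← Finset.sum_range_reflect]
  apply Finset.sum_congr rfl
  intro k hk
  rw [Finset.mem_range, Nat.lt_succ_iff] at hk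
  have h2 : n + 1 - 1 - k = n - k := by omega
  have h3 : n - (n - k) = k := by omega
  rw [h2, h3]
  have h4 : v ^ (n - k) * v ^ k = v ^ n := by
    rw [← pow_add]; congr 1; omega
  have h5 : v ^ n * v⁻¹ ^ k = v ^ (n - k) := by
    rw [← h4, mul_assoc, ← mul_pow, mul_inv_cancel₀ hv, one_pow, mul_one]
  rw [show v ^ n * (W.coeff k * v⁻¹ ^ k) = W.coeff k * (v ^ n * v⁻¹ ^ k) by ring, h5]

lemma revP_bound (n : ℕ) (W : ℂ[X]) (hW : W.degree ≤ n) (K : ℝ)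
    (hK : ∀ ζ : ℂ, ‖ζ‖ = 1 → ‖W.eval ζ‖ ≤ K) {v : ℂ} (hv : ‖v‖ ≤ 1) :
    ‖(revP n W).eval v‖ ≤ K := by
  have hb : Bornology.IsBounded (Metric.ball (0 : ℂ) 1) := Metric.isBounded_ball
  have hd : DiffContOnCl ℂ (fun x => (revP n W).eval x) (Metric.ball (0 : ℂ) 1) :=
    ((revP n W).differentiable).diffContOnCl
  have hfr : ∀ ζ ∈ frontier (Metric.ball (0 : ℂ) 1), ‖(revP n W).eval ζ‖ ≤ K := by
    intro ζ hζ
    rw [frontier_ball (0 : ℂ) one_ne_zero, Metric.mem_sphere, dist_zero_right] at hζ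
    have hζ0 : ζ ≠ 0 := by intro h; rw [h] at hζ; simp at hζ
    rw [revP_eval n W hW ζ hζ0]
    have hinv : ‖ζ⁻¹‖ = 1 := by rw [norm_inv, hζ]; norm_num
    calc ‖ζ ^ n * W.eval ζ⁻¹‖ = ‖ζ‖ ^ n * ‖W.eval ζ⁻¹‖ := by rw [norm_mul, norm_pow]
      _ ≤ K := by rw [hζ]; simpa using hK ζ⁻¹ hinv
  have hcl : v ∈ closure (Metric.ball (0 : ℂ) 1) := by
    rw [closure_ball (0 : ℂ) one_ne_zero]
    simpa [Metric.mem_closedBall, dist_zero_right] using hv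
  exact Complex.norm_le_of_forall_mem_frontier_norm_le hb hd hfr hcl

lemma maxmod (n : ℕ) (W : ℂ[X]) (hW : W.degree ≤ n) (K : ℝ)
    (hK : ∀ ζ : ℂ, ‖ζ‖ = 1 → ‖W.eval ζ‖ ≤ K) {w : ℂ} (hw : 1 ≤ ‖w‖) :
    ‖W.eval w‖ ≤ K * ‖w‖ ^ n := by
  have hw0 : w ≠ 0 := by
    intro h; rw [h] at hw; simp at hw; linarith
  have hwi : ‖w⁻¹‖ ≤ 1 := by
    rw [norm_inv]; exact inv_le_one_of_one_le₀ hw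
  have this := revP_bound n W hW K hK hwi
  rw [revP_eval n W hW w⁻¹ (inv_ne_zero hw0), inv_inv] at this
  have hnorm : ‖(w⁻¹) ^ n * W.eval w‖ = ‖w‖⁻¹ ^ n * ‖W.eval w‖ := by
    rw [norm_mul, norm_pow, norm_inv]
  rw [hnorm] at this
  have hwpos : (0:ℝ) < ‖w‖ ^ n := by positivity
  calc ‖W.eval w‖ = (‖w‖⁻¹ ^ n * ‖W.eval w‖) * ‖w‖ ^ n := by
        rw [inv_pow, mul_comm (‖w‖ ^ n)⁻¹, mul_assoc, inv_mul_cancel₀ (ne_of_gt hwpos), mul_one]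
    _ ≤ K * ‖w‖ ^ n := mul_le_mul_of_nonneg_right this (le_of_lt hwpos)

lemma coeff_bound (n : ℕ) (W : ℂ[X]) (hW : W.degree ≤ n) (K : ℝ)
    (hK : ∀ ζ : ℂ, ‖ζ‖ = 1 → ‖W.eval ζ‖ ≤ K) : ‖W.coeff n‖ ≤ K := by
  have h0 : (revP n W).eval 0 = W.coeff n := by
    have h1 : (revP n W).eval 0 = ∑ k ∈ Finset.range (n + 1), W.coeff (n - k) * (0:ℂ) ^ k := by
      simp only [revP, eval_finset_sum, eval_mul, eval_C, eval_pow, eval_X]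
    rw [h1, Finset.sum_eq_single 0]
    · simp
    · intro b _ hb; rw [zero_pow hb, mul_zero]
    · intro h; exact absurd (Finset.mem_range.2 (Nat.succ_pos n)) h
  have := revP_bound n W hW K hK (v := 0) (by simp)
  rwa [h0] at this

lemma prodpos_in (s : Multiset ℂ) (w : ℂ) (hw : 1 ≤ ‖w‖) (h : ∀ a ∈ s, ‖a‖ < 1) :
    ((s.card : ℝ) / 2) * normSq ((s.map fun a => X - C a).prod.eval w) ≤
      (w * ((s.map fun a => X - C a).prod.derivative.eval w) *
        (starRingEnd ℂ) ((s.map fun a => X - C a).prod.eval w)).re := by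
  induction s using Multiset.induction with
  | empty => simp
  | cons a t ih =>
    have ha : ‖a‖ < 1 := h a (Multiset.mem_cons_self a t)
    have ht : ∀ b ∈ t, ‖b‖ < 1 := fun b hb => h b (Multiset.mem_cons_of_mem hb)
    have ih' := ih ht
    set g : ℂ[X] := (t.map fun b => X - C b).prod with hg
    have hprod : ((a ::ₘ t).map fun b => X - C b).prod = (X - C a) * g := by
      rw [Multiset.map_cons, Multiset.prod_cons]
    rw [hprod, derivative_mul]
    simp only [derivative_sub, derivative_X, derivative_C, sub_zero, one_mul, eval_add, eval_mul,
      eval_sub, eval_X, eval_C]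
    set gw := g.eval w
    set gw' := g.derivative.eval w
    have expand : (w * (gw + (w - a) * gw') * (starRingEnd ℂ) ((w - a) * gw)).re =
        (w * (starRingEnd ℂ) (w - a)).re * normSq gw +
          normSq (w - a) * (w * gw' * (starRingEnd ℂ) gw).re := by
      rw [map_mul]
      have : w * (gw + (w - a) * gw') * ((starRingEnd ℂ) (w - a) * (starRingEnd ℂ) gw) =
          (w * (starRingEnd ℂ) (w - a)) * (gw * (starRingEnd ℂ) gw) +
            ((w - a) * (starRingEnd ℂ) (w - a)) * (w * gw' * (starRingEnd ℂ) gw) := by ring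
      rw [this, Complex.mul_conj, Complex.mul_conj]
      simp [Complex.add_re, Complex.mul_re, Complex.ofReal_re, Complex.ofReal_im]
    rw [expand]
    have key : normSq (w - a) / 2 ≤ (w * (starRingEnd ℂ) (w - a)).re := by
      have h1 : (w * (starRingEnd ℂ) (w - a)).re = normSq w - (w * (starRingEnd ℂ) a).re := by
        rw [map_sub, mul_sub]
        simp [Complex.sub_re, Complex.normSq_apply, Complex.mul_re, Complex.conj_re,
          Complex.conj_im]
      have h2 : normSq (w - a) = normSq w - 2 * (w * (starRingEnd ℂ) a).re + normSq a := by
        rw [Complex.normSq_sub]; ring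
      have h3 : normSq a ≤ normSq w := by
        have := Complex.normSq_eq_norm_sq a
        have h4 : normSq a = ‖a‖ ^ 2 := by rw [Complex.normSq_eq_norm_sq]
        have h5 : normSq w = ‖w‖ ^ 2 := by rw [Complex.normSq_eq_norm_sq]
        rw [h4, h5]
        have : ‖a‖ ≤ ‖w‖ := le_trans (le_of_lt ha) hw
        exact pow_le_pow_left₀ (norm_nonneg a) this 2
      rw [h1, h2]; linarith
    have hcard : (((a ::ₘ t).card : ℝ)) = (t.card : ℝ) + 1 := by
      rw [Multiset.card_cons]; push_cast; ring
    rw [hcard]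
    have hnsq : normSq ((w - a) * gw) = normSq (w - a) * normSq gw := by
      rw [map_mul]
    rw [hnsq]
    have hgw : (0:ℝ) ≤ normSq gw := normSq_nonneg _
    have hwa : (0:ℝ) ≤ normSq (w - a) := normSq_nonneg _
    nlinarith [ih', key, normSq_nonneg gw, normSq_nonneg (w - a)]

lemma prodpos_out (s : Multiset ℂ) (w : ℂ) (hw : ‖w‖ ≤ 1) (h : ∀ a ∈ s, 1 ≤ ‖a‖) :
    (w * ((s.map fun a => X - C a).prod.derivative.eval w) *
        (starRingEnd ℂ) ((s.map fun a => X - C a).prod.eval w)).re ≤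
      ((s.card : ℝ) / 2) * normSq ((s.map fun a => X - C a).prod.eval w) := by
  induction s using Multiset.induction with
  | empty => simp
  | cons a t ih =>
    have ha : 1 ≤ ‖a‖ := h a (Multiset.mem_cons_self a t)
    have ht : ∀ b ∈ t, 1 ≤ ‖b‖ := fun b hb => h b (Multiset.mem_cons_of_mem hb)
    have ih' := ih ht
    set g : ℂ[X] := (t.map fun b => X - C b).prod with hg
    have hprod : ((a ::ₘ t).map fun b => X - C b).prod = (X - C a) * g := by
      rw [Multiset.map_cons, Multiset.prod_cons]
    rw [hprod, derivative_mul]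
    simp only [derivative_sub, derivative_X, derivative_C, sub_zero, one_mul, eval_add, eval_mul,
      eval_sub, eval_X, eval_C]
    set gw := g.eval w
    set gw' := g.derivative.eval w
    have expand : (w * (gw + (w - a) * gw') * (starRingEnd ℂ) ((w - a) * gw)).re =
        (w * (starRingEnd ℂ) (w - a)).re * normSq gw +
          normSq (w - a) * (w * gw' * (starRingEnd ℂ) gw).re := by
      rw [map_mul]
      have : w * (gw + (w - a) * gw') * ((starRingEnd ℂ) (w - a) * (starRingEnd ℂ) gw) =
          (w * (starRingEnd ℂ) (w - a)) * (gw * (starRingEnd ℂ) gw) +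
            ((w - a) * (starRingEnd ℂ) (w - a)) * (w * gw' * (starRingEnd ℂ) gw) := by ring
      rw [this, Complex.mul_conj, Complex.mul_conj]
      simp [Complex.add_re, Complex.mul_re, Complex.ofReal_re, Complex.ofReal_im]
    rw [expand]
    have key : (w * (starRingEnd ℂ) (w - a)).re ≤ normSq (w - a) / 2 := by
      have h1 : (w * (starRingEnd ℂ) (w - a)).re = normSq w - (w * (starRingEnd ℂ) a).re := by
        rw [map_sub, mul_sub]
        simp [Complex.sub_re, Complex.normSq_apply, Complex.mul_re, Complex.conj_re,
          Complex.conj_im]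
      have h2 : normSq (w - a) = normSq w - 2 * (w * (starRingEnd ℂ) a).re + normSq a := by
        rw [Complex.normSq_sub]; ring
      have h3 : normSq w ≤ normSq a := by
        have := Complex.normSq_eq_norm_sq a
        have h4 : normSq a = ‖a‖ ^ 2 := by rw [Complex.normSq_eq_norm_sq]
        have h5 : normSq w = ‖w‖ ^ 2 := by rw [Complex.normSq_eq_norm_sq]
        rw [h4, h5]
        have : ‖w‖ ≤ ‖a‖ := le_trans hw ha
        exact pow_le_pow_left₀ (norm_nonneg w) this 2
      rw [h1, h2]; linarith
    have hcard : (((a ::ₘ t).card : ℝ)) = (t.card : ℝ) + 1 := by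
      rw [Multiset.card_cons]; push_cast; ring
    rw [hcard]
    have hnsq : normSq ((w - a) * gw) = normSq (w - a) * normSq gw := by
      rw [map_mul]
    rw [hnsq]
    have hgw : (0:ℝ) ≤ normSq gw := normSq_nonneg _
    have hwa : (0:ℝ) ≤ normSq (w - a) := normSq_nonneg _
    nlinarith [ih', key, normSq_nonneg gw, normSq_nonneg (w - a)]

lemma pos_of_roots_in (G : ℂ[X]) (hG : G ≠ 0) (h : ∀ a ∈ G.roots, ‖a‖ < 1) {w : ℂ}
    (hw : 1 ≤ ‖w‖) :
    ((G.natDegree : ℝ) / 2) * normSq (G.eval w) ≤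
      (w * (derivative G).eval w * (starRingEnd ℂ) (G.eval w)).re := by
  have hsp : Splits G := IsAlgClosed.splits G
  have hcard : G.roots.card = G.natDegree := (splits_iff_card_roots).1 hsp
  have heq : G = C G.leadingCoeff * (G.roots.map fun a => X - C a).prod :=
    hsp.eq_prod_roots
  set p : ℂ[X] := (G.roots.map fun a => X - C a).prod with hp
  have h1 : G.eval w = G.leadingCoeff * p.eval w := by
    conv_lhs => rw [heq]
    simp
  have h2 : (derivative G).eval w = G.leadingCoeff * (derivative p).eval w := by
    conv_lhs => rw [heq]
    rw [derivative_C_mul]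
    simp
  have base := prodpos_in G.roots w hw h
  rw [← hp] at base
  rw [h1, h2, ← hcard]
  have hre : (w * (G.leadingCoeff * (derivative p).eval w) *
      (starRingEnd ℂ) (G.leadingCoeff * p.eval w)).re =
      normSq G.leadingCoeff * (w * (derivative p).eval w * (starRingEnd ℂ) (p.eval w)).re := by
    rw [map_mul]
    have : w * (G.leadingCoeff * (derivative p).eval w) *
        ((starRingEnd ℂ) G.leadingCoeff * (starRingEnd ℂ) (p.eval w)) =
        (G.leadingCoeff * (starRingEnd ℂ) G.leadingCoeff) *
          (w * (derivative p).eval w * (starRingEnd ℂ) (p.eval w)) := by ring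
    rw [this, Complex.mul_conj]
    simp [Complex.mul_re]
  rw [hre, map_mul]
  have hnn : (0:ℝ) ≤ normSq G.leadingCoeff := normSq_nonneg _
  nlinarith [base]

lemma pos_of_roots_out (G : ℂ[X]) (hG : G ≠ 0) (h : ∀ a ∈ G.roots, 1 ≤ ‖a‖) {w : ℂ}
    (hw : ‖w‖ ≤ 1) :
    (w * (derivative G).eval w * (starRingEnd ℂ) (G.eval w)).re ≤
      ((G.natDegree : ℝ) / 2) * normSq (G.eval w) := by
  have hsp : Splits G := IsAlgClosed.splits G
  have hcard : G.roots.card = G.natDegree := (splits_iff_card_roots).1 hsp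
  have heq : G = C G.leadingCoeff * (G.roots.map fun a => X - C a).prod :=
    hsp.eq_prod_roots
  set p : ℂ[X] := (G.roots.map fun a => X - C a).prod with hp
  have h1 : G.eval w = G.leadingCoeff * p.eval w := by
    conv_lhs => rw [heq]
    simp
  have h2 : (derivative G).eval w = G.leadingCoeff * (derivative p).eval w := by
    conv_lhs => rw [heq]
    rw [derivative_C_mul]
    simp
  have base := prodpos_out G.roots w hw h
  rw [← hp] at base
  rw [h1, h2, ← hcard]
  have hre : (w * (G.leadingCoeff * (derivative p).eval w) *
      (starRingEnd ℂ) (G.leadingCoeff * p.eval w)).re =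
      normSq G.leadingCoeff * (w * (derivative p).eval w * (starRingEnd ℂ) (p.eval w)).re := by
    rw [map_mul]
    have : w * (G.leadingCoeff * (derivative p).eval w) *
        ((starRingEnd ℂ) G.leadingCoeff * (starRingEnd ℂ) (p.eval w)) =
        (G.leadingCoeff * (starRingEnd ℂ) G.leadingCoeff) *
          (w * (derivative p).eval w * (starRingEnd ℂ) (p.eval w)) := by ring
    rw [this, Complex.mul_conj]
    simp [Complex.mul_re]
  rw [hre, map_mul]
  have hnn : (0:ℝ) ≤ normSq G.leadingCoeff := normSq_nonneg _
  nlinarith [base]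

lemma normSq_smul_sub (m : ℝ) (A B : ℂ) :
    normSq ((m : ℂ) * A - B) = m ^ 2 * normSq A + normSq B - 2 * m * (B * (starRingEnd ℂ) A).re := by
  simp [Complex.normSq_apply, Complex.mul_re, Complex.mul_im, Complex.sub_re, Complex.sub_im,
    Complex.conj_re, Complex.conj_im, Complex.ofReal_re, Complex.ofReal_im]
  ring

lemma lemmaL (n : ℕ) (hn : 1 ≤ n) (W : ℂ[X]) (hW : W.degree ≤ (n : ℕ)) (K : ℝ)
    (hK : ∀ ζ : ℂ, ‖ζ‖ = 1 → ‖W.eval ζ‖ ≤ K) {ζ : ℂ} (hζ : ‖ζ‖ = 1) :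
    ‖(derivative W).eval ζ‖ + ‖(n : ℂ) * W.eval ζ - ζ * (derivative W).eval ζ‖ ≤ n * K := by
  have hn1 : (1:ℝ) ≤ (n:ℝ) := by exact_mod_cast hn
  have hK0 : 0 ≤ K := le_trans (norm_nonneg _) (hK 1 (by simp))
  rcases eq_or_lt_of_le hK0 with hK0' | hKpos
  · -- K = 0 : W = 0
    have hW0 : W = 0 := by
      apply W.eq_zero_of_infinite_isRoot
      apply Set.Infinite.mono (s := (fun r : ℝ => (r : ℂ)) '' Set.Ici 1)
      · rintro x ⟨r, hr, rfl⟩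
        have h1 : (1:ℝ) ≤ ‖(r:ℂ)‖ := by
          rw [Complex.norm_real]
          exact le_trans (Set.mem_Ici.1 hr) (le_abs_self r)
        have h2 := maxmod n W hW K hK h1
        rw [← hK0'] at h2
        simp only [zero_mul] at h2
        have h3 : ‖W.eval (r:ℂ)‖ = 0 := le_antisymm h2 (norm_nonneg _)
        simpa [IsRoot] using norm_eq_zero.1 h3
      · exact Set.Infinite.image (fun a _ b _ h => Complex.ofReal_injective h) (Set.Ici_infinite 1)
    subst hW0
    simp
    positivity
  · -- K > 0
    have hζ1 : (1:ℝ) ≤ ‖ζ‖ := le_of_eq hζ.symm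
    have hζ0 : ζ ≠ 0 := by intro h; rw [h] at hζ; simp at hζ
    set d := (derivative W).eval ζ with hd
    set ev := W.eval ζ with hev
    have core : ∀ l : ℂ, 1 < ‖l‖ →
        d - (n : ℂ) * l * (K : ℂ) * ζ ^ (n - 1) ≠ 0 ∧
        ‖(n : ℂ) * ev - ζ * d‖ ≤ ‖d - (n : ℂ) * l * (K : ℂ) * ζ ^ (n - 1)‖ := by
      intro l hl
      set G : ℂ[X] := W - C (l * (K : ℂ)) * X ^ n with hG
      have hdegC : (C (l * (K : ℂ)) * X ^ n).degree ≤ ((n : ℕ) : WithBot ℕ) := by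
        apply le_trans (degree_mul_le _ _)
        rw [degree_X_pow]
        have h0 : (C (l * (K : ℂ))).degree ≤ 0 := degree_C_le
        calc (C (l * (K : ℂ))).degree + (n : WithBot ℕ) ≤ 0 + (n : WithBot ℕ) :=
              add_le_add_left h0 _
          _ = (n : WithBot ℕ) := by simp
      have hdegG : G.degree ≤ (n : ℕ) := le_trans (degree_sub_le _ _) (by
        simp only [max_le_iff]; exact ⟨hW, hdegC⟩)
      have hcoeffG : G.coeff n = W.coeff n - l * (K : ℂ) := by
        rw [hG, coeff_sub, coeff_C_mul, coeff_X_pow, if_pos rfl, mul_one]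
      have hlK : K < ‖l * (K : ℂ)‖ := by
        rw [norm_mul, Complex.norm_real, Real.norm_eq_abs, abs_of_pos hKpos]
        nlinarith
      have hcoeffne : G.coeff n ≠ 0 := by
        rw [hcoeffG]
        intro h
        have h2 : W.coeff n = l * (K : ℂ) := by linear_combination h
        have h3 := coeff_bound n W hW K hK
        rw [h2] at h3
        linarith
      have hGne : G ≠ 0 := fun h => hcoeffne (by simp [h])
      have hndG : G.natDegree = n :=
        le_antisymm (natDegree_le_iff_degree_le.2 hdegG) (le_natDegree_of_ne_zero hcoeffne)
      have hroots : ∀ a ∈ G.roots, ‖a‖ < 1 := by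
        intro a ha
        by_contra hge
        push_neg at hge
        have haroot : G.eval a = 0 := (mem_roots hGne).1 ha
        have hWa : W.eval a = l * (K : ℂ) * a ^ n := by
          have h4 : W.eval a - l * (K : ℂ) * a ^ n = 0 := by
            simpa [hG] using haroot
          linear_combination h4
        have h1 := maxmod n W hW K hK hge
        rw [hWa] at h1
        have h2 : ‖l * (K : ℂ) * a ^ n‖ = ‖l * (K : ℂ)‖ * ‖a‖ ^ n := by
          rw [norm_mul, norm_pow]
        rw [h2] at h1
        have h3 : (0:ℝ) < ‖a‖ ^ n := by positivity
        nlinarith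
      have pos := pos_of_roots_in G hGne hroots hζ1
      rw [hndG] at pos
      have hGev : G.eval ζ = ev - l * (K : ℂ) * ζ ^ n := by simp [hG, hev]
      have hGd : (derivative G).eval ζ = d - l * (K : ℂ) * ((n : ℂ) * ζ ^ (n - 1)) := by
        simp [hG, hd, derivative_sub, derivative_C_mul, derivative_X_pow]
      have hGevne : G.eval ζ ≠ 0 := by
        intro h
        have h5 : ζ ∈ G.roots := (mem_roots hGne).2 h
        have h6 := hroots ζ h5
        rw [hζ] at h6
        linarith
      have hnormSqpos : 0 < normSq (G.eval ζ) := normSq_pos.2 hGevne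
      have hζpow : ζ * ζ ^ (n - 1) = ζ ^ n := by
        rw [← pow_succ']
        congr 1
        omega
      have key1 : (n : ℂ) * G.eval ζ - ζ * (derivative G).eval ζ = (n : ℂ) * ev - ζ * d := by
        rw [hGev, hGd, ← hζpow]
        ring
      have key2 : ζ * (derivative G).eval ζ = ζ * d - (n : ℂ) * l * (K : ℂ) * ζ ^ n := by
        rw [hGd, ← hζpow]; ring
      have step : normSq ((n : ℂ) * G.eval ζ - ζ * (derivative G).eval ζ) ≤
          normSq (ζ * (derivative G).eval ζ) := by
        have e1 := normSq_smul_sub (n : ℝ) (G.eval ζ) (ζ * (derivative G).eval ζ)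
        have e2 : (((n : ℝ)) : ℂ) = (n : ℂ) := by push_cast; ring
        rw [e2] at e1
        rw [e1]
        nlinarith [pos]
      have hGdne : (derivative G).eval ζ ≠ 0 := by
        intro h
        rw [h] at pos
        simp at pos
        nlinarith [pos, hnormSqpos, hn1]
      constructor
      · intro h
        apply hGdne
        rw [hGd]
        rw [show d - l * (K : ℂ) * ((n : ℂ) * ζ ^ (n - 1)) =
          d - (n : ℂ) * l * (K : ℂ) * ζ ^ (n - 1) by ring, h]
      · have h1 : ‖(n : ℂ) * G.eval ζ - ζ * (derivative G).eval ζ‖ ≤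
            ‖ζ * (derivative G).eval ζ‖ := by
          rw [Complex.norm_def, Complex.norm_def]
          exact Real.sqrt_le_sqrt step
        rw [key1, key2] at h1
        have h2 : ζ * d - (n : ℂ) * l * (K : ℂ) * ζ ^ n =
            ζ * (d - (n : ℂ) * l * (K : ℂ) * ζ ^ (n - 1)) := by
          rw [← hζpow]; ring
        rw [h2, norm_mul, hζ, one_mul] at h1
        exact h1
    -- Bernstein
    have hnK : (0:ℝ) < n * K := by positivity
    have hζp : ζ ^ (n - 1) ≠ 0 := pow_ne_zero _ hζ0
    have hden : (n : ℂ) * (K : ℂ) * ζ ^ (n - 1) ≠ 0 := by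
      apply mul_ne_zero (mul_ne_zero _ _) hζp
      · exact Nat.cast_ne_zero.2 (by omega)
      · exact_mod_cast ne_of_gt hKpos
    have bern : ‖d‖ ≤ n * K := by
      by_contra hgt
      push_neg at hgt
      set l : ℂ := d / ((n : ℂ) * (K : ℂ) * ζ ^ (n - 1)) with hl
      have hnl : 1 < ‖l‖ := by
        rw [hl, norm_div, norm_mul, norm_mul, norm_pow, hζ, one_pow, mul_one]
        rw [Complex.norm_natCast, Complex.norm_real, Real.norm_eq_abs, abs_of_pos hKpos]
        rw [lt_div_iff₀ hnK, one_mul]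
        exact hgt
      apply (core l hnl).1
      rw [hl]
      linear_combination (-d) * mul_inv_cancel₀ hden
    rcases eq_or_ne d 0 with hd0 | hdne
    · rw [hd0, norm_zero, zero_add, mul_zero, sub_zero, norm_mul, Complex.norm_natCast]
      exact mul_le_mul_of_nonneg_left (hK ζ hζ) (by positivity)
    · apply le_of_forall_pos_le_add
      intro ε hε
      set ρ : ℝ := 1 + ε / (n * K) with hρ
      have hρ1 : 1 < ρ := by
        rw [hρ]; nlinarith [div_pos hε hnK]
      set u : ℂ := d / (‖d‖ : ℂ) with hu
      have hdpos : (0:ℝ) < ‖d‖ := norm_pos_iff.2 hdne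
      have hun : ‖u‖ = 1 := by
        rw [hu, norm_div, Complex.norm_real, Real.norm_eq_abs, abs_of_pos hdpos,
          div_self (ne_of_gt hdpos)]
      set l : ℂ := (ρ : ℂ) * u * ((starRingEnd ℂ) ζ) ^ (n - 1) with hl
      have hcn : ‖(starRingEnd ℂ) ζ‖ = 1 := by
        rw [RCLike.norm_conj]; exact hζ
      have hnl : 1 < ‖l‖ := by
        rw [hl, norm_mul, norm_mul, norm_pow, hcn, one_pow, mul_one, hun, mul_one,
          Complex.norm_real, Real.norm_eq_abs, abs_of_pos (by linarith : (0:ℝ) < ρ)]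
        exact hρ1
      have hconj : ((starRingEnd ℂ) ζ) ^ (n - 1) * ζ ^ (n - 1) = 1 := by
        rw [← mul_pow]
        have h8 : (starRingEnd ℂ) ζ * ζ = 1 := by
          rw [mul_comm, Complex.mul_conj]
          norm_cast
          rw [Complex.normSq_eq_norm_sq, hζ]; norm_num
        rw [h8, one_pow]
      have halign : (n : ℂ) * l * (K : ℂ) * ζ ^ (n - 1) = ((n * ρ * K : ℝ) : ℂ) * u := by
        rw [hl]
        push_cast
        calc (n : ℂ) * ((ρ:ℂ) * u * ((starRingEnd ℂ) ζ) ^ (n - 1)) * (K : ℂ) * ζ ^ (n - 1)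
            = (n : ℂ) * (ρ:ℂ) * (K:ℂ) * u * (((starRingEnd ℂ) ζ) ^ (n - 1) * ζ ^ (n - 1)) := by
              ring
          _ = (n : ℂ) * (ρ:ℂ) * (K:ℂ) * u := by rw [hconj, mul_one]
          _ = (n : ℂ) * (ρ:ℂ) * (K:ℂ) * u := rfl
      have hdune : ((‖d‖:ℝ):ℂ) ≠ 0 := by exact_mod_cast ne_of_gt hdpos
      have hdu : d = ((‖d‖ : ℝ) : ℂ) * u := by
        rw [hu, mul_comm, div_mul_eq_mul_div, mul_div_assoc, div_self hdune, mul_one]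
      have hsub : d - (n : ℂ) * l * (K : ℂ) * ζ ^ (n - 1) =
          (((‖d‖ - n * ρ * K : ℝ)) : ℂ) * u := by
        rw [halign]
        conv_lhs => rw [hdu]
        push_cast
        ring
      have hval : ‖d - (n : ℂ) * l * (K : ℂ) * ζ ^ (n - 1)‖ = n * ρ * K - ‖d‖ := by
        rw [hsub, norm_mul, hun, mul_one, Complex.norm_real, Real.norm_eq_abs]
        rw [abs_of_nonpos (by nlinarith)]
        ring
      have h9 := (core l hnl).2
      rw [hval] at h9
      have hfin : ‖d‖ + ‖(n : ℂ) * ev - ζ * d‖ ≤ n * ρ * K := by linarith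
      have hcalc : n * ρ * K = n * K + ε := by
        rw [hρ]
        field_simp
      linarith [hfin, le_of_eq hcalc.symm]

lemma lemmaE (n : ℕ) (P : ℂ[X]) (hP : P.degree ≤ (n : ℕ)) (hP0 : P ≠ 0)
    (hroots : ∀ a ∈ P.roots, 1 ≤ ‖a‖) {ζ : ℂ} (hζ : ‖ζ‖ = 1) :
    ‖(derivative P).eval ζ‖ ≤ ‖(n : ℂ) * P.eval ζ - ζ * (derivative P).eval ζ‖ := by
  have pos := pos_of_roots_out P hP0 hroots (le_of_eq hζ)
  have hm : (P.natDegree : ℝ) ≤ (n : ℝ) := by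
    exact_mod_cast natDegree_le_iff_degree_le.2 hP
  have e1 := normSq_smul_sub (n : ℝ) (P.eval ζ) (ζ * (derivative P).eval ζ)
  have e2 : (((n : ℝ)) : ℂ) = (n : ℂ) := by push_cast; ring
  rw [e2] at e1
  have step : normSq (ζ * (derivative P).eval ζ) ≤
      normSq ((n : ℂ) * P.eval ζ - ζ * (derivative P).eval ζ) := by
    rw [e1]
    have hnn : (0:ℝ) ≤ normSq (P.eval ζ) := normSq_nonneg _
    have hn0 : (0:ℝ) ≤ (n : ℝ) := Nat.cast_nonneg n
    have k1 : 2*(n:ℝ) * (ζ * (derivative P).eval ζ * (starRingEnd ℂ) (P.eval ζ)).re ≤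
        2*(n:ℝ)*((P.natDegree:ℝ)/2 * normSq (P.eval ζ)) :=
      mul_le_mul_of_nonneg_left pos (by positivity)
    nlinarith [k1, mul_le_mul_of_nonneg_right hm hnn, hn0]
  have h1 : ‖ζ * (derivative P).eval ζ‖ ≤ ‖(n : ℂ) * P.eval ζ - ζ * (derivative P).eval ζ‖ := by
    rw [Complex.norm_def, Complex.norm_def]
    exact Real.sqrt_le_sqrt step
  rwa [norm_mul, hζ, one_mul] at h1

lemma erdosLax (n : ℕ) (hn : 1 ≤ n) (P : ℂ[X]) (hP : P.degree ≤ (n : ℕ)) (hP0 : P ≠ 0)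
    (hroots : ∀ a ∈ P.roots, 1 ≤ ‖a‖) (M : ℝ)
    (hM : ∀ ζ : ℂ, ‖ζ‖ = 1 → ‖P.eval ζ‖ ≤ M) {ζ : ℂ} (hζ : ‖ζ‖ = 1) :
    ‖(derivative P).eval ζ‖ ≤ (n : ℝ) * M / 2 := by
  have h1 := lemmaE n P hP hP0 hroots hζ
  have h2 := lemmaL n hn P hP M hM hζ
  linarith

theorem growth_nonvanishing
    (n : ℕ) (P : Polynomial ℂ) (hP : P.degree ≤ (n : ℕ))
    (hP0 : ∀ z : ℂ, ‖z‖ < 1 → P.eval z ≠ 0)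
    (M : ℝ) (hM : IsGreatest ((fun z => ‖P.eval z‖) '' Metric.sphere (0 : ℂ) 1) M) :
    ∀ z : ℂ, 1 ≤ ‖z‖ →
      ‖P.eval z‖ ≤ (1 / 2) * (‖z‖ ^ n + 1) * M := by
  intro z hz
  have hMub : ∀ ζ : ℂ, ‖ζ‖ = 1 → ‖P.eval ζ‖ ≤ M := by
    intro ζ h
    exact hM.2 ⟨ζ, by simpa [Metric.mem_sphere, dist_zero_right] using h, rfl⟩
  have hMnn : (0:ℝ) ≤ M := le_trans (norm_nonneg _) (hMub 1 (by simp))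
  rcases Nat.eq_zero_or_pos n with hn0 | hn
  · -- n = 0 : P is constant
    subst hn0
    have hc : P = C (P.coeff 0) := eq_C_of_degree_le_zero (by exact_mod_cast hP)
    have h1 : ‖P.eval z‖ = ‖P.eval 1‖ := by rw [hc]; simp
    have h2 := hMub 1 (by simp)
    rw [h1]
    rw [pow_zero]
    linarith
  · -- n ≥ 1
    have hP0' : P ≠ 0 := fun h => hP0 0 (by norm_num) (by simp [h])
    have hroots : ∀ a ∈ P.roots, 1 ≤ ‖a‖ := by
      intro a ha
      by_contra hlt
      push_neg at hlt
      exact hP0 a hlt ((mem_roots hP0').1 ha)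
    -- degree of derivative
    have hdeg' : (derivative P).degree ≤ ((n - 1 : ℕ) : WithBot ℕ) := by
      rw [← natDegree_le_iff_degree_le]
      have h3 : P.natDegree ≤ n := natDegree_le_iff_degree_le.2 hP
      have h4 := natDegree_derivative_le P
      omega
    have hdbound : ∀ w : ℂ, 1 ≤ ‖w‖ →
        ‖(derivative P).eval w‖ ≤ ((n : ℝ) * M / 2) * ‖w‖ ^ (n - 1) := by
      intro w hw
      exact maxmod (n - 1) (derivative P) hdeg' ((n : ℝ) * M / 2)
        (fun ζ hζ => erdosLax n hn P hP hP0' hroots M hMub hζ) hw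
    -- set up the segment
    have hz0 : z ≠ 0 := by
      intro h; rw [h, norm_zero] at hz; linarith
    set R : ℝ := ‖z‖ with hR
    have hR1 : (1:ℝ) ≤ R := hz
    have hRne : ((R:ℝ):ℂ) ≠ 0 := by
      simp only [ne_eq, Complex.ofReal_eq_zero]
      intro h; rw [hR] at h; exact hz0 (norm_eq_zero.1 h)
    set u : ℂ := ((R : ℝ) : ℂ)⁻¹ * z with hu
    have hun : ‖u‖ = 1 := by
      rw [hu, norm_mul, norm_inv, Complex.norm_real, Real.norm_eq_abs,
        abs_of_pos (by linarith : (0:ℝ) < R), ← hR]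
      field_simp
    have hRu : ((R : ℝ) : ℂ) * u = z := by
      rw [hu, ← mul_assoc, mul_inv_cancel₀ hRne, one_mul]
    -- FTC
    have hderiv : ∀ t ∈ Set.uIcc (1:ℝ) R, HasDerivAt (fun t : ℝ => P.eval ((t : ℂ) * u))
        (u * (derivative P).eval ((t : ℂ) * u)) t := by
      intro t _
      have hg : HasDerivAt (fun w : ℂ => P.eval (w * u))
          ((derivative P).eval ((t : ℂ) * u) * u) ((t : ℂ) : ℂ) := by
        have hinner : HasDerivAt (fun w : ℂ => w * u) (1 * u) ((t : ℂ) : ℂ) :=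
          (hasDerivAt_id _).mul_const u
        have houter := P.hasDerivAt (((t : ℂ)) * u)
        have := HasDerivAt.comp ((t : ℂ) : ℂ) houter hinner
        simpa [mul_comm, Function.comp_def] using this
      have := hg.comp_ofReal
      simpa [mul_comm] using this
    have hcont : Continuous fun t : ℝ => u * (derivative P).eval ((t : ℂ) * u) := by
      apply continuous_const.mul
      exact (derivative P).continuous.comp (Complex.continuous_ofReal.mul continuous_const)
    have hint : IntervalIntegrable (fun t : ℝ => u * (derivative P).eval ((t : ℂ) * u))
        MeasureTheory.volume 1 R := hcont.intervalIntegrable 1 R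
    have hftc := intervalIntegral.integral_eq_sub_of_hasDerivAt hderiv hint
    have hfR : P.eval ((R : ℂ) * u) = P.eval z := by rw [hRu]
    have hf1 : P.eval (((1:ℝ) : ℂ) * u) = P.eval u := by norm_num
    rw [show ((R:ℝ):ℂ) = (R:ℂ) from rfl] at hftc
    -- bound the integral
    have hbound : ‖∫ t in (1:ℝ)..R, u * (derivative P).eval ((t : ℂ) * u)‖ ≤
        |∫ t in (1:ℝ)..R, ((n : ℝ) * M / 2) * t ^ (n - 1)| := by
      apply intervalIntegral.norm_integral_le_abs_of_norm_le
      · filter_upwards [MeasureTheory.ae_restrict_mem measurableSet_Ioc] with t ht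
        rw [Set.uIoc_of_le hR1] at ht
        have ht1 : (1:ℝ) ≤ t := le_of_lt ht.1
        have htn : ‖(t : ℂ) * u‖ = t := by
          rw [norm_mul, hun, mul_one, Complex.norm_real, Real.norm_eq_abs,
            abs_of_pos (by linarith)]
        have h5 : (1:ℝ) ≤ ‖(t : ℂ) * u‖ := by rw [htn]; exact ht1
        have h6 := hdbound ((t : ℂ) * u) h5
        rw [htn] at h6
        calc ‖u * (derivative P).eval ((t : ℂ) * u)‖
            = ‖(derivative P).eval ((t : ℂ) * u)‖ := by rw [norm_mul, hun, one_mul]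
          _ ≤ ((n : ℝ) * M / 2) * t ^ (n - 1) := h6
      · exact (continuous_const.mul (continuous_pow (n-1))).intervalIntegrable 1 R
    -- compute the integral of the bound
    obtain ⟨m, hm⟩ : ∃ m, n = m + 1 := ⟨n - 1, by omega⟩
    have hval : ∫ t in (1:ℝ)..R, ((n : ℝ) * M / 2) * t ^ (n - 1) = M / 2 * (R ^ n - 1) := by
      rw [intervalIntegral.integral_const_mul, integral_pow]
      subst hm
      simp only [Nat.add_sub_cancel]
      push_cast
      field_simp
      ring
    have hRn : (1:ℝ) ≤ R ^ n := one_le_pow₀ hR1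
    have hRn0 : (0:ℝ) ≤ M / 2 * (R ^ n - 1) := mul_nonneg (by linarith) (by linarith)
    have hsub : P.eval z - P.eval u = ∫ t in (1:ℝ)..R, u * (derivative P).eval ((t : ℂ) * u) := by
      rw [hftc, hfR, hf1]
    have hnorm2 : ‖P.eval z - P.eval u‖ ≤ M / 2 * (R ^ n - 1) := by
      rw [hsub]
      calc ‖∫ t in (1:ℝ)..R, u * (derivative P).eval ((t : ℂ) * u)‖
          ≤ |∫ t in (1:ℝ)..R, ((n : ℝ) * M / 2) * t ^ (n - 1)| := hbound
        _ = M / 2 * (R ^ n - 1) := by rw [hval]; exact abs_of_nonneg hRn0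
    have hu_le : ‖P.eval u‖ ≤ M := hMub u hun
    have htri : ‖P.eval z‖ ≤ ‖P.eval u‖ + ‖P.eval z - P.eval u‖ := by
      have h8 := norm_add_le (P.eval u) (P.eval z - P.eval u)
      simpa using h8
    have hring : M + M / 2 * (R ^ n - 1) = 1 / 2 * (R ^ n + 1) * M := by ring
    linarith
end

section
/- Let f be a complex polynomial of exact degree n ≥ 1 with all zeros in the disk |z| ≤ 1, and let P be a complex polynomial of degree at most n with |P(z)| ≤ |f(z)| for all z with |z| = 1. Then for every complex number γ with |γ| > 1, every zero of the polynomial P(z) − γ·f(z) lies in the closed disk |z| ≤ 1. -/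
open Polynomial Finset

lemma reflect_eval_aux {p : ℂ[X]} {N : ℕ} (hp : p.natDegree ≤ N) {x : ℂ} (hx : x ≠ 0) :
    (reflect N p).eval x⁻¹ * x ^ N = p.eval x := by
  letI := invertibleOfNonzero hx
  have h := eval₂_reflect_mul_pow (RingHom.id ℂ) x N p hp
  simpa only [eval₂_id, invOf_eq_inv] using h

lemma sphere_nhds_neBot (μ : ℂ) (hμ : ‖μ‖ = 1) (S : Set ℂ) (hS : S.Finite) :
    (nhdsWithin μ (Metric.sphere (0:ℂ) 1 \ S)).NeBot := by
  set φ : ℝ → ℂ := fun t => μ * Complex.exp (t * Complex.I) with hφ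
  have hcont : Continuous φ := by continuity
  have h0 : φ 0 = μ := by simp [hφ]
  have hμ0 : μ ≠ 0 := by intro h; simp [h] at hμ
  have hinj : Set.InjOn φ (Set.Ioc (0:ℝ) 1) := by
    intro s hs t ht h
    have hexp : Complex.exp (s * Complex.I) = Complex.exp (t * Complex.I) :=
      mul_left_cancel₀ hμ0 h
    obtain ⟨k, hk⟩ := Complex.exp_eq_exp_iff_exists_int.mp hexp
    have h1 : ((s:ℂ) - t) * Complex.I = ((k * (2 * Real.pi) : ℝ) : ℂ) * Complex.I := by
      push_cast
      linear_combination hk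
    have h2 : (s:ℂ) - t = ((k * (2 * Real.pi) : ℝ) : ℂ) :=
      mul_right_cancel₀ Complex.I_ne_zero h1
    have h3 : s - t = (k : ℝ) * (2 * Real.pi) := by exact_mod_cast h2
    have hk0 : k = 0 := by
      by_contra hkne
      have h4 : (1:ℝ) ≤ |(k:ℝ)| := by exact_mod_cast Int.one_le_abs (by omega)
      have h5 : |s - t| = |(k:ℝ)| * (2 * Real.pi) := by
        rw [h3, abs_mul, abs_of_pos Real.two_pi_pos]
      have h6 : |s - t| < 1 := by
        rw [abs_sub_lt_iff]
        constructor <;> [linarith [hs.1, hs.2, ht.1, ht.2]; linarith [hs.1, hs.2, ht.1, ht.2]]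
      nlinarith [Real.pi_gt_three]
    rw [hk0] at h3
    simp at h3
    linarith
  -- the set of bad times
  set T : Set ℝ := ⋃ c ∈ S, {t : ℝ | t ∈ Set.Ioc (0:ℝ) 1 ∧ φ t = c} with hT
  have hTfin : T.Finite := by
    refine hS.biUnion fun c _ => ?_
    apply Set.Subsingleton.finite
    intro a ha b hb
    exact hinj ha.1 hb.1 (ha.2.trans hb.2.symm)
  have hmem : ∀ᶠ t in nhdsWithin 0 (Set.Ioi (0:ℝ)), φ t ∈ Metric.sphere (0:ℂ) 1 \ S := by
    have h1 : ∀ᶠ t in nhdsWithin 0 (Set.Ioi (0:ℝ)), t ∈ Set.Ioc (0:ℝ) 1 :=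
      Ioc_mem_nhdsGT_of_mem (by norm_num)
    have h2' : ∀ᶠ t in nhds (0:ℝ), t ∉ T := by
      refine hTfin.isClosed.isOpen_compl.mem_nhds ?_
      simp only [hT, Set.mem_compl_iff, Set.mem_iUnion]
      push_neg
      intro c _ h
      exact absurd h.1.1 (lt_irrefl 0)
    have h2 : ∀ᶠ t in nhdsWithin 0 (Set.Ioi (0:ℝ)), t ∉ T :=
      h2'.filter_mono nhdsWithin_le_nhds
    filter_upwards [h1, h2] with t ht1 ht2
    constructor
    · simp only [Metric.mem_sphere, dist_zero_right, hφ]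
      rw [norm_mul, hμ, one_mul]
      exact Complex.norm_exp_ofReal_mul_I t
    · intro hc
      exact ht2 (Set.mem_biUnion hc ⟨ht1, rfl⟩)
  have htend : Filter.Tendsto φ (nhdsWithin 0 (Set.Ioi (0:ℝ)))
      (nhdsWithin μ (Metric.sphere (0:ℂ) 1 \ S)) := by
    rw [tendsto_nhdsWithin_iff]
    exact ⟨h0 ▸ (hcont.tendsto 0).mono_left nhdsWithin_le_nhds, hmem⟩
  exact htend.neBot

lemma rootMult_le {q g : ℂ[X]} (hq : q ≠ 0) (hg : g ≠ 0)
    (hle : ∀ w : ℂ, ‖w‖ = 1 → ‖q.eval w‖ ≤ ‖g.eval w‖)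
    (μ : ℂ) (hμ : ‖μ‖ = 1) : g.rootMultiplicity μ ≤ q.rootMultiplicity μ := by
  by_contra hlt
  push_neg at hlt
  set k := q.rootMultiplicity μ with hk
  set m := g.rootMultiplicity μ with hm
  set u := q /ₘ (X - C μ) ^ k with hu
  set v := g /ₘ (X - C μ) ^ m with hv
  have hqu : (X - C μ) ^ k * u = q := pow_mul_divByMonic_rootMultiplicity_eq q μ
  have hgv : (X - C μ) ^ m * v = g := pow_mul_divByMonic_rootMultiplicity_eq g μ
  have huμ : u.eval μ ≠ 0 := eval_divByMonic_pow_rootMultiplicity_ne_zero μ hq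
  have hvμ : v.eval μ ≠ 0 := eval_divByMonic_pow_rootMultiplicity_ne_zero μ hg
  haveI := sphere_nhds_neBot μ hμ {μ} (Set.finite_singleton μ)
  set L := nhdsWithin μ (Metric.sphere (0:ℂ) 1 \ {μ}) with hL
  have key : ∀ w ∈ Metric.sphere (0:ℂ) 1 \ {μ},
      ‖u.eval w‖ ≤ ‖w - μ‖ ^ (m - k) * ‖v.eval w‖ := by
    intro w hw
    have hw1 : ‖w‖ = 1 := by simpa using hw.1
    have hwμ : w ≠ μ := hw.2
    have hwμ' : (0:ℝ) < ‖w - μ‖ := by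
      rw [norm_pos_iff]; exact sub_ne_zero.mpr hwμ
    have h := hle w hw1
    rw [← hqu, ← hgv, eval_mul, eval_mul, eval_pow, eval_pow, eval_sub, eval_X, eval_C,
      norm_mul, norm_mul, norm_pow, norm_pow] at h
    have hsplit : ‖w - μ‖ ^ m = ‖w - μ‖ ^ k * ‖w - μ‖ ^ (m - k) := by
      rw [← pow_add]; congr 1; omega
    rw [hsplit, mul_assoc] at h
    exact le_of_mul_le_mul_left h (pow_pos hwμ' k)
  have t1 : Filter.Tendsto (fun w => ‖u.eval w‖) L (nhds ‖u.eval μ‖) :=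
    ((continuous_norm.comp u.continuous).tendsto μ).mono_left nhdsWithin_le_nhds
  have t2 : Filter.Tendsto (fun w => ‖w - μ‖ ^ (m - k) * ‖v.eval w‖) L (nhds 0) := by
    have hc : Continuous fun w : ℂ => ‖w - μ‖ ^ (m - k) * ‖v.eval w‖ := by continuity
    have := (hc.tendsto μ).mono_left (nhdsWithin_le_nhds (s := Metric.sphere (0:ℂ) 1 \ {μ}))
    simpa [sub_self, zero_pow (by omega : m - k ≠ 0)] using this
  have hev : ∀ᶠ w in L, ‖u.eval w‖ ≤ ‖w - μ‖ ^ (m - k) * ‖v.eval w‖ :=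
    eventually_mem_nhdsWithin.mono fun w hw => key w hw
  have : ‖u.eval μ‖ ≤ 0 := le_of_tendsto_of_tendsto t1 t2 hev
  exact huμ (norm_le_zero_iff.mp this)

/-- Key lemma: if all roots of `g` lie outside the open unit disc and `‖q‖ ≤ ‖g‖` on
the unit circle, then the same holds on the closed unit disc. -/
lemma key_lemma (q g : ℂ[X]) (hg : g ≠ 0)
    (hgroots : ∀ w : ℂ, g.eval w = 0 → 1 ≤ ‖w‖)
    (hcirc : ∀ w : ℂ, ‖w‖ = 1 → ‖q.eval w‖ ≤ ‖g.eval w‖) :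
    ∀ w : ℂ, ‖w‖ ≤ 1 → ‖q.eval w‖ ≤ ‖g.eval w‖ := by
  rcases eq_or_ne q 0 with hq0 | hq0
  · intro w _; simp [hq0]
  classical
  set B := g.roots.filter (fun μ => ‖μ‖ = 1) with hB
  set b := (B.map (fun μ => X - C μ)).prod with hb
  have hbg : b ∣ g :=
    (Multiset.prod_dvd_prod_of_le (Multiset.map_le_map (Multiset.filter_le _ _))).trans
      (prod_multiset_X_sub_C_dvd g)
  have hbq : b ∣ q := by
    refine (Multiset.prod_dvd_prod_of_le (Multiset.map_le_map ?_)).trans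
      (prod_multiset_X_sub_C_dvd q)
    rw [Multiset.le_iff_count]
    intro μ
    rw [count_roots]
    by_cases hμ : ‖μ‖ = 1
    · rw [hB, Multiset.count_filter_of_pos (p := fun μ : ℂ => ‖μ‖ = 1) hμ, count_roots]
      exact rootMult_le hq0 hg hcirc μ hμ
    · rw [hB, Multiset.count_filter_of_neg (p := fun μ : ℂ => ‖μ‖ = 1) hμ]; exact Nat.zero_le _
  obtain ⟨g1, hg1⟩ := hbg
  obtain ⟨q1, hq1⟩ := hbq
  have hbroots : b.roots = B := roots_multiset_prod_X_sub_C B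
  have hbmonic : b.Monic := monic_multiset_prod_of_monic _ _ (fun _ _ => monic_X_sub_C _)
  have hb0 : b ≠ 0 := hbmonic.ne_zero
  have hg1ne : g1 ≠ 0 := by
    intro h; exact hg (by rw [hg1, h, mul_zero])
  have hg1z : ∀ w : ℂ, ‖w‖ ≤ 1 → g1.eval w ≠ 0 := by
    intro w hw hwz
    have hgz : g.eval w = 0 := by rw [hg1, eval_mul, hwz, mul_zero]
    have hw1 : ‖w‖ = 1 := le_antisymm hw (hgroots w hgz)
    have hmul : g.rootMultiplicity w = b.rootMultiplicity w + g1.rootMultiplicity w := by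
      rw [hg1]; exact rootMultiplicity_mul (hg1 ▸ hg)
    have hbw : b.rootMultiplicity w = g.rootMultiplicity w := by
      rw [← count_roots, hbroots, hB, Multiset.count_filter_of_pos (p := fun μ : ℂ => ‖μ‖ = 1) hw1, count_roots]
    have hgw0 : g1.rootMultiplicity w = 0 := by omega
    have : 0 < g1.rootMultiplicity w := (rootMultiplicity_pos hg1ne).mpr hwz
    omega
  have hSfin : {w : ℂ | b.IsRoot w}.Finite := finite_setOf_isRoot hb0
  have hcirc1 : ∀ w : ℂ, ‖w‖ = 1 → ‖q1.eval w‖ ≤ ‖g1.eval w‖ := by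
    intro μ hμ
    haveI := sphere_nhds_neBot μ hμ _ hSfin
    set L := nhdsWithin μ (Metric.sphere (0:ℂ) 1 \ {w : ℂ | b.IsRoot w}) with hL
    have t1 : Filter.Tendsto (fun w => ‖q1.eval w‖) L (nhds ‖q1.eval μ‖) :=
      ((continuous_norm.comp q1.continuous).tendsto μ).mono_left nhdsWithin_le_nhds
    have t2 : Filter.Tendsto (fun w => ‖g1.eval w‖) L (nhds ‖g1.eval μ‖) :=
      ((continuous_norm.comp g1.continuous).tendsto μ).mono_left nhdsWithin_le_nhds
    have hev : ∀ᶠ w in L, ‖q1.eval w‖ ≤ ‖g1.eval w‖ := by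
      refine eventually_mem_nhdsWithin.mono fun w hw => ?_
      have hw1 : ‖w‖ = 1 := by simpa using hw.1
      have hbw : b.eval w ≠ 0 := hw.2
      have h := hcirc w hw1
      rw [hq1, hg1, eval_mul, eval_mul, norm_mul, norm_mul] at h
      exact le_of_mul_le_mul_left h (norm_pos_iff.mpr hbw)
    exact le_of_tendsto_of_tendsto t1 t2 hev
  intro w hw
  set φ : ℂ → ℂ := fun w => q1.eval w / g1.eval w with hφ
  have hd : DiffContOnCl ℂ φ (Metric.ball 0 1) := by
    apply DifferentiableOn.diffContOnCl
    apply DifferentiableOn.div q1.differentiable.differentiableOn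
      g1.differentiable.differentiableOn
    intro x hx
    apply hg1z
    rw [closure_ball (0:ℂ) one_ne_zero] at hx
    simpa using hx
  have hbound : ∀ x ∈ frontier (Metric.ball (0:ℂ) 1), ‖φ x‖ ≤ 1 := by
    intro x hx
    rw [frontier_ball (0:ℂ) one_ne_zero] at hx
    have hx1 : ‖x‖ = 1 := by simpa using hx
    rw [hφ]
    simp only [norm_div]
    rw [div_le_one (norm_pos_iff.mpr (hg1z x hx1.le))]
    exact hcirc1 x hx1
  have hin : w ∈ closure (Metric.ball (0:ℂ) 1) := by
    rw [closure_ball (0:ℂ) one_ne_zero]; simpa using hw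
  have hmax : ‖φ w‖ ≤ 1 :=
    Complex.norm_le_of_forall_mem_frontier_norm_le Metric.isBounded_ball hd hbound hin
  have h1 : ‖q1.eval w‖ ≤ ‖g1.eval w‖ := by
    rw [hφ] at hmax
    simp only [norm_div] at hmax
    rw [div_le_one (norm_pos_iff.mpr (hg1z w hw))] at hmax
    exact hmax
  rw [hq1, hg1, eval_mul, eval_mul, norm_mul, norm_mul]
  exact mul_le_mul_of_nonneg_left h1 (norm_nonneg _)

theorem zeros_of_P_sub_gamma_f
    (n : ℕ) (hn : 1 ≤ n)
    (f : Polynomial ℂ) (hf : f.natDegree = n)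
    (hfzeros : ∀ z : ℂ, f.eval z = 0 → ‖z‖ ≤ 1)
    (P : Polynomial ℂ) (hP : P.degree ≤ (n : ℕ))
    (hPf : ∀ z : ℂ, ‖z‖ = 1 → ‖P.eval z‖ ≤ ‖f.eval z‖) :
    ∀ γ : ℂ, 1 < ‖γ‖ →
      ∀ z : ℂ, (P - Polynomial.C γ * f).eval z = 0 → ‖z‖ ≤ 1 := by
  intro γ hγ z hz
  by_contra hz1
  push_neg at hz1
  have hz0 : z ≠ 0 := by
    intro h; rw [h] at hz1; simp at hz1; linarith
  have hfz : f.eval z ≠ 0 := by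
    intro h; exact absurd (hfzeros z h) (by linarith)
  have hPz : P.eval z = γ * f.eval z := by
    rw [eval_sub, eval_mul, eval_C, sub_eq_zero] at hz; exact hz
  have hf0 : f ≠ 0 := by
    intro h; rw [h] at hf; simp at hf; omega
  have hPn : P.natDegree ≤ n := natDegree_le_iff_degree_le.mpr hP
  set q := reflect n P with hqdef
  set g := reflect n f with hgdef
  have hg0 : g.eval 0 ≠ 0 := by
    have hc : g.eval 0 = f.coeff n := by
      rw [← coeff_zero_eq_eval_zero, hgdef, coeff_reflect]
      simp
    rw [hc, ← hf]
    exact mt leadingCoeff_eq_zero.mp hf0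
  have hgne : g ≠ 0 := fun h => hg0 (by rw [h]; simp)
  have hgroots : ∀ w : ℂ, g.eval w = 0 → 1 ≤ ‖w‖ := by
    intro w hw
    have hw0 : w ≠ 0 := fun h => hg0 (h ▸ hw)
    have hfw : f.eval w⁻¹ = 0 := by
      have h := reflect_eval_aux (le_of_eq hf) (inv_ne_zero hw0)
      rw [inv_inv] at h
      rw [← h, hw, zero_mul]
    have h1 : ‖w⁻¹‖ ≤ 1 := hfzeros _ hfw
    rw [norm_inv] at h1
    have hw' : 0 < ‖w‖ := norm_pos_iff.mpr hw0
    rw [inv_le_one_iff₀] at h1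
    rcases h1 with h | h
    · linarith
    · exact h
  have hcirc : ∀ w : ℂ, ‖w‖ = 1 → ‖q.eval w‖ ≤ ‖g.eval w‖ := by
    intro w hw
    have hw0 : w ≠ 0 := by intro h; rw [h] at hw; simp at hw
    have hwi : ‖w⁻¹‖ = 1 := by rw [norm_inv, hw]; norm_num
    have h1 := reflect_eval_aux hPn (inv_ne_zero hw0)
    have h2 := reflect_eval_aux (le_of_eq hf) (inv_ne_zero hw0)
    rw [inv_inv] at h1 h2
    have e1 : ‖q.eval w‖ = ‖P.eval w⁻¹‖ := by
      rw [← h1, norm_mul, norm_pow, norm_inv, hw]; norm_num; rfl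
    have e2 : ‖g.eval w‖ = ‖f.eval w⁻¹‖ := by
      rw [← h2, norm_mul, norm_pow, norm_inv, hw]; norm_num; rfl
    rw [e1, e2]
    exact hPf _ hwi
  have hkey := key_lemma q g hgne hgroots hcirc
  have hzi : ‖z⁻¹‖ ≤ 1 := by
    rw [norm_inv]
    rw [inv_le_one_iff₀]; right; linarith
  have h4 := hkey z⁻¹ hzi
  have h1 := reflect_eval_aux hPn hz0
  have h2 := reflect_eval_aux (le_of_eq hf) hz0
  have e1 : ‖P.eval z‖ = ‖q.eval z⁻¹‖ * ‖z‖ ^ n := by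
    rw [← h1, norm_mul, norm_pow]
  have e2 : ‖f.eval z‖ = ‖g.eval z⁻¹‖ * ‖z‖ ^ n := by
    rw [← h2, norm_mul, norm_pow]
  have hPle : ‖P.eval z‖ ≤ ‖f.eval z‖ := by
    rw [e1, e2]
    exact mul_le_mul_of_nonneg_right h4 (by positivity)
  have hPgt : ‖P.eval z‖ = ‖γ‖ * ‖f.eval z‖ := by
    rw [hPz, norm_mul]
  have hfpos : 0 < ‖f.eval z‖ := norm_pos_iff.mpr hfz
  nlinarith
end

section
/- Let P be a complex polynomial of exact degree n ≥ 1 with P(z) ≠ 0 for every z with |z| < 1, and let P* be the polynomial defined by P*(z) = z^n · conj(P(1/conj(z))), i.e. if P(z) = Σ_{k=0}^{n} a_k z^k then P*(z) = Σ_{k=0}^{n} conj(a_{n−k}) z^k. Then for every complex number γ with |γ| > 1, every zero of the polynomial P(z) − γ·P*(z) lies in the closed disk |z| ≤ 1. -/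
open Polynomial Finset

/-- The conjugate-reciprocal polynomial `P*(z) = z^n conj(P(1/conj z))`,
i.e. `P*(z) = ∑_{k=0}^{n} conj(a_{n-k}) z^k` when `P(z) = ∑_{k=0}^{n} a_k z^k`. -/
noncomputable def conjReflect (n : ℕ) (P : Polynomial ℂ) : Polynomial ℂ :=
  ∑ k ∈ Finset.range (n + 1),
    Polynomial.C ((starRingEnd ℂ) (P.coeff (n - k))) * Polynomial.X ^ k

/-- Pointwise inequality: `‖z - r‖ ≤ ‖1 - conj z * r‖` whenever `‖z‖, ‖r‖ ≥ 1`. -/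
lemma key_pt (z r : ℂ) (hz : 1 ≤ ‖z‖) (hr : 1 ≤ ‖r‖) :
    ‖z - r‖ ≤ ‖1 - (starRingEnd ℂ) z * r‖ := by
  have h1 : Complex.normSq (1 - (starRingEnd ℂ) z * r) - Complex.normSq (z - r)
      = (Complex.normSq z - 1) * (Complex.normSq r - 1) := by
    simp [Complex.normSq_apply, Complex.mul_re, Complex.mul_im, Complex.sub_re, Complex.sub_im]
    ring
  have hz2 : 1 ≤ Complex.normSq z := by
    rw [Complex.normSq_eq_norm_sq]; nlinarith [hz]
  have hr2 : 1 ≤ Complex.normSq r := by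
    rw [Complex.normSq_eq_norm_sq]; nlinarith [hr]
  have h2 : ‖z - r‖ ^ 2 ≤ ‖1 - (starRingEnd ℂ) z * r‖ ^ 2 := by
    rw [Complex.sq_norm, Complex.sq_norm]
    nlinarith
  exact (pow_le_pow_iff_left₀ (norm_nonneg _) (norm_nonneg _) two_ne_zero).mp h2

/-- Evaluation formula for the conjugate-reciprocal polynomial at a nonzero point. -/
lemma conjReflect_eval (n : ℕ) (P : Polynomial ℂ) (hP : P.natDegree ≤ n) (z : ℂ) (hz : z ≠ 0) :
    (conjReflect n P).eval z = z ^ n * (starRingEnd ℂ) (P.eval ((starRingEnd ℂ) z)⁻¹) := by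
  have hdeg : P.natDegree < n + 1 := by omega
  rw [Polynomial.eval_eq_sum_range' hdeg]
  simp only [conjReflect, eval_finset_sum, eval_mul, eval_C, eval_pow, eval_X, map_sum, map_mul,
    map_pow, map_inv₀, Complex.conj_conj, Finset.mul_sum]
  have hstep : ∀ i ∈ Finset.range (n + 1),
      z ^ n * ((starRingEnd ℂ) (P.coeff i) * z⁻¹ ^ i)
        = (starRingEnd ℂ) (P.coeff i) * z ^ (n - i) := by
    intro i hi
    rw [Finset.mem_range] at hi
    rw [pow_sub₀ z hz (by omega : i ≤ n), inv_pow]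
    ring
  rw [Finset.sum_congr rfl hstep,
    ← Finset.sum_range_reflect (fun j => (starRingEnd ℂ) (P.coeff j) * z ^ (n - j)) (n + 1)]
  apply Finset.sum_congr rfl
  intro k hk
  rw [Finset.mem_range] at hk
  simp only [Nat.add_sub_cancel]
  rw [Nat.sub_sub_self (by omega : k ≤ n)]

/-- Key inequality: if all roots of `P` have norm at least `1` and `‖z‖ ≥ 1`, then
`‖P(z)‖ ≤ ‖z‖^n ‖P(1/conj z)‖`. -/
lemma key_ineq (n : ℕ) (P : Polynomial ℂ) (hP : P.natDegree = n)
    (hroots : ∀ r ∈ P.roots, 1 ≤ ‖r‖) (z : ℂ) (hz : 1 ≤ ‖z‖) (hzne : z ≠ 0) :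
    ‖P.eval z‖ ≤ ‖z‖ ^ n * ‖P.eval ((starRingEnd ℂ) z)⁻¹‖ := by
  have hsplit : P.Splits := IsAlgClosed.splits P
  have hcard : P.roots.card = n := by rw [← hP]; exact Polynomial.splits_iff_card_roots.mp hsplit
  have hfac := hsplit.eq_prod_roots
  set c := P.leadingCoeff with hc
  set w : ℂ := ((starRingEnd ℂ) z)⁻¹ with hw
  have hcz : (starRingEnd ℂ) z ≠ 0 := by simpa using hzne
  have heval : ∀ x : ℂ, ‖P.eval x‖ = ‖c‖ * (P.roots.map (fun r => ‖x - r‖)).prod := by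
    intro x
    conv_lhs => rw [hfac]
    rw [Polynomial.eval_mul, Polynomial.eval_C, norm_mul]
    congr 1
    rw [Polynomial.eval_multiset_prod]
    rw [show ‖(Multiset.map (eval x) (Multiset.map (fun a => X - C a) P.roots)).prod‖
        = ((Multiset.map (eval x) (Multiset.map (fun a => X - C a) P.roots)).map
            (fun a => ‖a‖)).prod from
      (Multiset.prod_hom _ (normHom.toMonoidHom : ℂ →* ℝ)).symm,
      Multiset.map_map, Multiset.map_map]
    simp [Function.comp]
  rw [heval z, heval w]
  have hzn : ‖z‖ ^ n = (P.roots.map (fun _ => ‖z‖)).prod := by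
    rw [Multiset.map_const', Multiset.prod_replicate, hcard]
  rw [hzn]
  have hptw : ∀ r ∈ P.roots, ‖z‖ * ‖w - r‖ = ‖1 - (starRingEnd ℂ) z * r‖ := by
    intro r _
    rw [← RCLike.norm_conj (K := ℂ) z, ← norm_mul]
    congr 1
    rw [mul_sub, hw, mul_inv_cancel₀ hcz]
  have hD : (P.roots.map (fun _ => ‖z‖)).prod * (P.roots.map (fun r => ‖w - r‖)).prod
      = (P.roots.map (fun r => ‖1 - (starRingEnd ℂ) z * r‖)).prod := by
    rw [← Multiset.prod_map_mul, Multiset.map_congr rfl hptw]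
  have hle : (P.roots.map (fun r => ‖z - r‖)).prod
      ≤ (P.roots.map (fun r => ‖1 - (starRingEnd ℂ) z * r‖)).prod := by
    apply Multiset.prod_map_le_prod_map₀
    · intro r _; positivity
    · intro r hr; exact key_pt z r hz (hroots r hr)
  rw [mul_left_comm, hD]
  exact mul_le_mul_of_nonneg_left hle (norm_nonneg _)

theorem zeros_of_P_sub_gamma_conjReflect
    (n : ℕ) (hn : 1 ≤ n)
    (P : Polynomial ℂ) (hP : P.natDegree = n)
    (hP0 : ∀ z : ℂ, ‖z‖ < 1 → P.eval z ≠ 0) :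
    ∀ γ : ℂ, 1 < ‖γ‖ →
      ∀ z : ℂ, (P - Polynomial.C γ * conjReflect n P).eval z = 0 → ‖z‖ ≤ 1 := by
  intro γ hγ z hz
  by_contra h1
  push_neg at h1
  have hzne : z ≠ 0 := by
    intro h; rw [h, norm_zero] at h1; linarith
  have hPne : P ≠ 0 := fun h => hP0 0 (by norm_num) (by simp [h])
  have hroots : ∀ r ∈ P.roots, 1 ≤ ‖r‖ := by
    intro r hr
    by_contra hcon
    push_neg at hcon
    exact hP0 r hcon ((Polynomial.mem_roots hPne).mp hr)
  set w : ℂ := ((starRingEnd ℂ) z)⁻¹ with hw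
  have hwn : ‖w‖ < 1 := by
    rw [hw, norm_inv, RCLike.norm_conj]
    rw [inv_lt_one₀ (by linarith : (0:ℝ) < ‖z‖)]
    exact h1
  have hPw : P.eval w ≠ 0 := hP0 w hwn
  have hrefl := conjReflect_eval n P (le_of_eq hP) z hzne
  have heq : P.eval z = γ * ((conjReflect n P).eval z) := by
    simp only [eval_sub, eval_mul, eval_C, sub_eq_zero] at hz
    exact hz
  have hnorm : ‖P.eval z‖ = ‖γ‖ * (‖z‖ ^ n * ‖P.eval w‖) := by
    rw [heq, hrefl, norm_mul, norm_mul, norm_pow, RCLike.norm_conj]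
  have hk := key_ineq n P hP hroots z (le_of_lt h1) hzne
  rw [← hw] at hk
  have hPwpos : 0 < ‖P.eval w‖ := norm_pos_iff.mpr hPw
  have hzpos : 0 < ‖z‖ ^ n := by positivity
  nlinarith [hk, hnorm, mul_pos (by linarith : (0:ℝ) < ‖γ‖ - 1) (mul_pos hzpos hPwpos)]
end
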